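/- If P is an orthogonal projection on a Hilbert space H, g is a unitary operator on H, and gPg^{-1} - P is a compact operator, then the Toeplitz operator T = P g P, viewed as an operator from the range of P to itself, is Fredholm. -/

import Mathlib

open ContinuousLinearMap Metric

/-- A bounded operator is Fredholm if its kernel is finite dimensional and its
cokernel is finite dimensional. -/
def IsFredholmOp {E F : Type*} [NormedAddCommGroup E] [NormedSpace ℂ E]
    [NormedAddCommGroup F] [NormedSpace ℂ F] (T : E →L[ℂ] F) : Prop :=
  FiniteDimensional ℂ (LinearMap.ker (T : E →ₗ[ℂ] F)) ∧ FiniteDimensional ℂ (F ⧸ LinearMap.range (T : E →ₗ[ℂ] F))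

/-- The Toeplitz-type operator `P T P` viewed as an operator from `im P` to `im P`. -/
noncomputable def toeplitzOp {H : Type*} [NormedAddCommGroup H] [InnerProductSpace ℂ H]
    [CompleteSpace H] (P T : H →L[ℂ] H) :
    ↥(LinearMap.range (P : H →ₗ[ℂ] H)) →L[ℂ] ↥(LinearMap.range (P : H →ₗ[ℂ] H)) :=
  ((P.comp (T.comp (LinearMap.range (P : H →ₗ[ℂ] H)).subtypeL))).codRestrict (LinearMap.range (P : H →ₗ[ℂ] H))
    (fun x => LinearMap.mem_range_self (P : H →ₗ[ℂ] H) _)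


lemma findim_ker_one_add {E : Type*} [NormedAddCommGroup E] [NormedSpace ℂ E]
    (K : E →L[ℂ] E) (hK : IsCompactOperator ⇑K) :
    FiniteDimensional ℂ (LinearMap.ker ((((1 : E →L[ℂ] E) + K : E →L[ℂ] E)) : E →ₗ[ℂ] E)) := by
  set N := LinearMap.ker ((((1 : E →L[ℂ] E) + K : E →L[ℂ] E)) : E →ₗ[ℂ] E) with hN
  obtain ⟨M₀, hM₀, himg⟩ := hK.image_closedBall_subset_compact (𝕜₁ := ℂ) 1
  have hNclosed : IsClosed (N : Set E) := ContinuousLinearMap.isClosed_ker _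
  have hfix : ∀ x ∈ N, x = -(K x) := by
    intro x hx
    have h1 : x + K x = 0 := hx
    exact eq_neg_of_add_eq_zero_left h1
  set S : Set E := closedBall 0 1 ∩ (N : Set E) with hS
  have hScompact : IsCompact S := by
    refine IsCompact.of_isClosed_subset hM₀.neg
      ((isClosed_closedBall.inter hNclosed)) ?_
    rintro x ⟨hx1, hx2⟩
    rw [hfix x hx2]
    exact Set.neg_mem_neg.2 (himg ⟨x, hx1, rfl⟩)
  have hball : closedBall (0 : N) 1 = Subtype.val ⁻¹' S := by
    ext x
    simp only [mem_closedBall_zero_iff, Set.mem_preimage, hS, Set.mem_inter_iff,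
      SetLike.coe_mem, and_true]
    exact ⟨fun h => ⟨h, x.2⟩, fun h => h.1⟩
  have : IsCompact (closedBall (0 : N) 1) := by
    rw [hball]
    exact hNclosed.isClosedEmbedding_subtypeVal.isCompact_preimage hScompact
  exact FiniteDimensional.of_isCompact_closedBall₀ ℂ one_pos this

lemma isClosed_range_one_add {E : Type*} [NormedAddCommGroup E] [InnerProductSpace ℂ E]
    [CompleteSpace E] (K : E →L[ℂ] E) (hK : IsCompactOperator ⇑K) :
    IsClosed (LinearMap.range ((((1 : E →L[ℂ] E) + K : E →L[ℂ] E)) : E →ₗ[ℂ] E) : Set E) := by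
  set A := (1 : E →L[ℂ] E) + K with hA
  set N := LinearMap.ker (A : E →ₗ[ℂ] E) with hNdef
  haveI hNfin : FiniteDimensional ℂ N := findim_ker_one_add K hK
  haveI : CompleteSpace N := FiniteDimensional.complete ℂ N
  set M := Nᗮ with hMdef
  have hMclosed : IsClosed (M : Set E) := N.isClosed_orthogonal
  haveI : CompleteSpace M := hMclosed.completeSpace_coe
  set B : M →L[ℂ] E := A.comp M.subtypeL with hB
  -- bounded below
  have hBu : ∀ x : M, B x = (x : E) + K x := fun x => rfl
  have hbdd : ∃ c : ℝ, 0 < c ∧ ∀ x : M, c * ‖x‖ ≤ ‖B x‖ := by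
    by_contra hcon
    push_neg at hcon
    have key : ∀ n : ℕ, ∃ x : M, ‖x‖ = 1 ∧ ‖B x‖ < 1 / (n + 1) := by
      intro n
      obtain ⟨x, hx⟩ := hcon (1 / (n + 1)) (by positivity)
      have hxne : ‖x‖ ≠ 0 := by
        intro h0
        rw [h0, mul_zero] at hx
        exact absurd hx (by simpa using norm_nonneg _)
      refine ⟨((‖x‖⁻¹ : ℝ) : ℂ) • x, ?_, ?_⟩
      · rw [norm_smul]
        simp only [Complex.norm_real, norm_inv, abs_norm, norm_norm]
        exact inv_mul_cancel₀ hxne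
      · rw [map_smul, norm_smul]
        simp only [Complex.norm_real, norm_inv, abs_norm, norm_norm]
        calc ‖x‖⁻¹ * ‖B x‖ < ‖x‖⁻¹ * (1 / (n + 1) * ‖x‖) := by
              apply mul_lt_mul_of_pos_left hx
              exact inv_pos.2 ((norm_nonneg x).lt_of_ne' hxne)
          _ = 1 / (n + 1) := by
              rw [mul_comm (1 / ((n:ℝ) + 1)) ‖x‖, ← mul_assoc, inv_mul_cancel₀ hxne, one_mul]
    choose u hu1 hu2 using key
    obtain ⟨M₀, hM₀, himg⟩ := hK.image_closedBall_subset_compact (𝕜₁ := ℂ) 1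
    have hmem : ∀ n, K ((u n : E)) ∈ M₀ := by
      intro n
      refine himg ⟨(u n : E), ?_, rfl⟩
      rw [mem_closedBall_zero_iff]
      exact le_of_eq (hu1 n)
    obtain ⟨z, hzM₀, φ, hφ, hconv⟩ := hM₀.tendsto_subseq hmem
    have hBlim : Filter.Tendsto (fun n => B (u (φ n))) Filter.atTop (nhds 0) := by
      rw [tendsto_zero_iff_norm_tendsto_zero]
      refine squeeze_zero (fun n => norm_nonneg _) (fun n => (hu2 (φ n)).le) ?_
      have h1 : Filter.Tendsto (fun n : ℕ => 1 / ((n : ℝ) + 1)) Filter.atTop (nhds 0) :=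
        tendsto_one_div_add_atTop_nhds_zero_nat
      exact h1.comp hφ.tendsto_atTop
    have hulim : Filter.Tendsto (fun n => (u (φ n) : E)) Filter.atTop (nhds (-z)) := by
      have heq : (fun n => (u (φ n) : E)) = fun n => B (u (φ n)) - K ((u (φ n) : E)) := by
        funext n
        rw [hBu]
        abel
      rw [heq]
      simpa using hBlim.sub hconv
    have hzM : -z ∈ M := hMclosed.mem_of_tendsto hulim (Filter.Eventually.of_forall fun n => (u (φ n)).2)
    have hzN : -z ∈ N := by
      have h2 : Filter.Tendsto (fun n => A ((u (φ n) : E))) Filter.atTop (nhds (A (-z))) :=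
        (A.continuous.tendsto _).comp hulim
      have heq : (fun n => A ((u (φ n) : E))) = fun n => B (u (φ n)) := rfl
      rw [heq] at h2
      have h3 := tendsto_nhds_unique h2 hBlim
      simpa [hNdef, LinearMap.mem_ker] using h3
    have hz0 : -z = 0 := by
      have h4 : -z ∈ N ⊓ Nᗮ := ⟨hzN, hzM⟩
      rw [N.inf_orthogonal_eq_bot] at h4
      simpa using h4
    have hz1 : ‖z‖ = 1 := by
      have h5 : Filter.Tendsto (fun n => ‖(u (φ n) : E)‖) Filter.atTop (nhds ‖(-z : E)‖) :=
        (continuous_norm.tendsto _).comp hulim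
      have heq : (fun n => ‖(u (φ n) : E)‖) = fun _ => (1:ℝ) := funext fun n => hu1 (φ n)
      rw [heq] at h5
      have h6 := tendsto_nhds_unique tendsto_const_nhds h5
      simpa using h6.symm
    rw [neg_eq_zero] at hz0
    rw [hz0, norm_zero] at hz1
    norm_num at hz1
  obtain ⟨c, hc, hcb⟩ := hbdd
  have hanti : AntilipschitzWith (⟨c, hc.le⟩ : NNReal)⁻¹ B := by
    apply ContinuousLinearMap.antilipschitz_of_bound
    intro x
    show ‖x‖ ≤ c⁻¹ * ‖B x‖
    calc ‖x‖ = c⁻¹ * (c * ‖x‖) := by rw [← mul_assoc, inv_mul_cancel₀ hc.ne', one_mul]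
      _ ≤ c⁻¹ * ‖B x‖ := mul_le_mul_of_nonneg_left (hcb x) (inv_nonneg.2 hc.le)
  have hclosedB : IsClosed (Set.range B) := hanti.isClosed_range B.uniformContinuous
  have hrangeeq : (LinearMap.range (A : E →ₗ[ℂ] E) : Set E) = Set.range B := by
    ext y
    constructor
    · rintro ⟨x, rfl⟩
      obtain ⟨m, hm, n, hn, rfl⟩ : ∃ m ∈ M, ∃ n ∈ N, m + n = x := by
        have htop : M ⊔ N = ⊤ := by
          rw [hMdef, sup_comm]
          exact Submodule.sup_orthogonal_of_hasOrthogonalProjection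
        have : x ∈ M ⊔ N := htop ▸ Submodule.mem_top
        obtain ⟨m, hm, n, hn, h⟩ := Submodule.mem_sup.1 this
        exact ⟨m, hm, n, hn, h⟩
      refine ⟨⟨m, hm⟩, ?_⟩
      have hAn : A n = 0 := hn
      simp [hB, map_add, hAn]
    · rintro ⟨x, rfl⟩
      exact ⟨(x : E), rfl⟩
  rw [hrangeeq]
  exact hclosedB

lemma orthogonal_range_eq_ker_adjoint {E : Type*} [NormedAddCommGroup E]
    [InnerProductSpace ℂ E] [CompleteSpace E] (A : E →L[ℂ] E) :
    (LinearMap.range (A : E →ₗ[ℂ] E))ᗮ = LinearMap.ker ((ContinuousLinearMap.adjoint A : E →L[ℂ] E) : E →ₗ[ℂ] E) := by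
  ext x
  rw [Submodule.mem_orthogonal, LinearMap.mem_ker]
  constructor
  · intro h
    have h2 : inner (𝕜 := ℂ) (ContinuousLinearMap.adjoint A x) (ContinuousLinearMap.adjoint A x) = 0 := by
      rw [ContinuousLinearMap.adjoint_inner_right]
      exact h _ ⟨_, rfl⟩
    exact inner_self_eq_zero.mp h2
  · intro h u hu
    obtain ⟨y, rfl⟩ := hu
    change inner ℂ (A y) x = 0
    rw [← ContinuousLinearMap.adjoint_inner_right, show ContinuousLinearMap.adjoint A x = 0 from h, inner_zero_right]

lemma findim_coker {E : Type*} [NormedAddCommGroup E] [InnerProductSpace ℂ E]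
    [CompleteSpace E] (T S K : E →L[ℂ] E) (hK : IsCompactOperator ⇑K)
    (hKsa : IsSelfAdjoint K) (h : T * S = 1 + K) :
    FiniteDimensional ℂ (E ⧸ LinearMap.range (T : E →ₗ[ℂ] E)) := by
  set A : E →L[ℂ] E := 1 + K with hAdef
  have hclosed : IsClosed (LinearMap.range (A : E →ₗ[ℂ] E) : Set E) := isClosed_range_one_add K hK
  haveI : CompleteSpace (LinearMap.range (A : E →ₗ[ℂ] E)) := hclosed.completeSpace_coe
  have hle : LinearMap.range (A : E →ₗ[ℂ] E) ≤ LinearMap.range (T : E →ₗ[ℂ] E) := by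
    rintro x ⟨y, rfl⟩
    exact ⟨S y, by rw [← h]; rfl⟩
  have hAsa : IsSelfAdjoint A := (IsSelfAdjoint.one (E →L[ℂ] E)).add hKsa
  have horth : (LinearMap.range (A : E →ₗ[ℂ] E))ᗮ = LinearMap.ker (A : E →ₗ[ℂ] E) := by
    rw [orthogonal_range_eq_ker_adjoint, hAsa.adjoint_eq]
  haveI hfin : FiniteDimensional ℂ ((LinearMap.range (A : E →ₗ[ℂ] E))ᗮ) := by
    rw [horth]; exact findim_ker_one_add K hK
  have htop : LinearMap.range (A : E →ₗ[ℂ] E) ⊔ (LinearMap.range (A : E →ₗ[ℂ] E))ᗮ = ⊤ :=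
    Submodule.sup_orthogonal_of_hasOrthogonalProjection
  let f : ((LinearMap.range (A : E →ₗ[ℂ] E))ᗮ) →ₗ[ℂ] E ⧸ LinearMap.range (T : E →ₗ[ℂ] E) :=
    (LinearMap.range (T : E →ₗ[ℂ] E)).mkQ ∘ₗ (Submodule.subtype _)
  have hsurj : Function.Surjective f := by
    intro q
    obtain ⟨x, rfl⟩ := Submodule.mkQ_surjective _ q
    have hx : x ∈ LinearMap.range (A : E →ₗ[ℂ] E) ⊔ (LinearMap.range (A : E →ₗ[ℂ] E))ᗮ := htop ▸ Submodule.mem_top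
    obtain ⟨r, hr, w, hw, rfl⟩ := Submodule.mem_sup.1 hx
    refine ⟨⟨w, hw⟩, ?_⟩
    show (LinearMap.range (T : E →ₗ[ℂ] E)).mkQ w = (LinearMap.range (T : E →ₗ[ℂ] E)).mkQ (r + w)
    have hr0 : (LinearMap.range (T : E →ₗ[ℂ] E)).mkQ r = 0 := (Submodule.Quotient.mk_eq_zero _).2 (hle hr)
    rw [map_add, hr0, zero_add]
  exact Module.Finite.of_surjective f hsurj

/-- If `P` is an orthogonal projection on a Hilbert space `H`, `g` is unitary and
`gPg⁻¹ - P` is compact, then the Toeplitz operator `PgP : im P → im P` is Fredholm. -/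
theorem toeplitz_fredholm {H : Type*} [NormedAddCommGroup H] [InnerProductSpace ℂ H]
    [CompleteSpace H] (P g : H →L[ℂ] H)
    (hPsa : IsSelfAdjoint P) (hPidem : P.comp P = P)
    (hg : g ∈ unitary (H →L[ℂ] H))
    (hcomp : IsCompactOperator ⇑(g * P * star g - P)) :
    IsFredholmOp (toeplitzOp P g) := by
  obtain ⟨hg1, hg2⟩ := Unitary.mem_iff.mp hg
  set E := LinearMap.range (P : H →ₗ[ℂ] H) with hEdef
  have hPfix : ∀ x ∈ E, P x = x := by
    rintro x ⟨y, rfl⟩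
    calc P (P y) = (P.comp P) y := rfl
      _ = P y := by rw [hPidem]
  have hEclosed : IsClosed (E : Set H) := by
    have : (E : Set H) = (LinearMap.ker (((1 - P : H →L[ℂ] H)) : H →ₗ[ℂ] H) : Set H) := by
      ext x
      constructor
      · intro hx
        simp only [SetLike.mem_coe, LinearMap.mem_ker] at *
        show x - P x = 0
        rw [hPfix x hx, sub_self]
      · intro hx
        simp only [SetLike.mem_coe, LinearMap.mem_ker] at hx
        have : x - P x = 0 := hx
        exact ⟨x, (sub_eq_zero.mp this).symm⟩
    rw [this]
    exact ContinuousLinearMap.isClosed_ker _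
  haveI : CompleteSpace E := hEclosed.completeSpace_coe
  set C : H →L[ℂ] H := g * P * star g - P with hCdef
  have hCsa : IsSelfAdjoint C := by
    simp only [IsSelfAdjoint, hCdef, star_sub, star_mul, star_star, hPsa.star_eq, mul_assoc]
  set C' : H →L[ℂ] H := star g * P * g - P with hC'def
  have hC'eq : C' = -(star g * C * g) := by
    have h3 : star g * (g * P) = P := by rw [← mul_assoc, hg1, one_mul]
    rw [hC'def, hCdef]
    simp only [mul_sub, sub_mul, mul_assoc, hg1, mul_one, h3, neg_sub]
  have hC'compact : IsCompactOperator ⇑C' := by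
    have h1 : IsCompactOperator ⇑(star g * C * g) := by
      have he : ⇑(star g * C * g) = ⇑(star g) ∘ (⇑C ∘ ⇑g) := rfl
      rw [he]
      exact (hcomp.comp_clm g).clm_comp (star g)
    have he2 : ⇑C' = -⇑(star g * C * g) := by rw [hC'eq]; rfl
    rw [he2]
    exact h1.neg
  have htc : ∀ (D : H →L[ℂ] H), IsCompactOperator ⇑D → IsCompactOperator ⇑(toeplitzOp P D) := by
    intro D hD
    have h1 : IsCompactOperator ⇑(P.comp (D.comp E.subtypeL)) := by
      have he : ⇑(P.comp (D.comp E.subtypeL)) = ⇑P ∘ (⇑D ∘ ⇑E.subtypeL) := rfl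
      rw [he]
      exact ((hD.comp_clm E.subtypeL).clm_comp P)
    exact h1.codRestrict (fun x => LinearMap.mem_range_self (P : H →ₗ[ℂ] H) _) hEclosed
  have hKcpt : IsCompactOperator ⇑(toeplitzOp P C) := htc C hcomp
  have hK'cpt : IsCompactOperator ⇑(toeplitzOp P C') := htc C' hC'compact
  have hTS : toeplitzOp P g * toeplitzOp P (star g) = 1 + toeplitzOp P C := by
    ext x
    show P (g (P (star g (x : H)))) = (x : H) + P (C (x : H))
    have hPx : P (x : H) = x := hPfix _ x.2
    have hce : C (x : H) = g (P (star g (x : H))) - (x : H) := by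
      show (g * P * star g) (x:H) - P (x:H) = _
      rw [hPx]; rfl
    rw [hce, map_sub, hPx, add_sub_cancel]
  have hST : toeplitzOp P (star g) * toeplitzOp P g = 1 + toeplitzOp P C' := by
    ext x
    show P (star g (P (g (x : H)))) = (x : H) + P (C' (x : H))
    have hPx : P (x : H) = x := hPfix _ x.2
    have hce : C' (x : H) = star g (P (g (x : H))) - (x : H) := by
      show (star g * P * g) (x:H) - P (x:H) = _
      rw [hPx]; rfl
    rw [hce, map_sub, hPx, add_sub_cancel]
  have hKsa : IsSelfAdjoint (toeplitzOp P C) := by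
    rw [ContinuousLinearMap.isSelfAdjoint_iff_isSymmetric]
    intro x y
    have hPsym := ContinuousLinearMap.isSelfAdjoint_iff_isSymmetric.mp hPsa
    have hCsym := ContinuousLinearMap.isSelfAdjoint_iff_isSymmetric.mp hCsa
    rw [E.coe_inner, E.coe_inner]
    show inner (𝕜 := ℂ) (P (C (x : H))) (y : H) = inner (𝕜 := ℂ) (x : H) (P (C (y : H)))
    calc inner (𝕜 := ℂ) (P (C (x : H))) (y : H) = inner (𝕜 := ℂ) (C (x : H)) (P (y : H)) := hPsym _ _
      _ = inner (𝕜 := ℂ) (C (x : H)) (y : H) := by rw [hPfix _ y.2]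
      _ = inner (𝕜 := ℂ) (x : H) (C (y : H)) := hCsym _ _
      _ = inner (𝕜 := ℂ) (P (x : H)) (C (y : H)) := by rw [hPfix _ x.2]
      _ = inner (𝕜 := ℂ) (x : H) (P (C (y : H))) := hPsym _ _
  constructor
  · haveI := findim_ker_one_add (toeplitzOp P C') hK'cpt
    apply Submodule.finiteDimensional_of_le (S₂ := LinearMap.ker (((1 + toeplitzOp P C' : E →L[ℂ] E)) : E →ₗ[ℂ] E))
    intro x hx
    rw [LinearMap.mem_ker] at hx ⊢
    rw [← hST]
    show toeplitzOp P (star g) (toeplitzOp P g x) = 0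
    rw [show toeplitzOp P g x = 0 from hx, map_zero]
  · exact findim_coker _ (toeplitzOp P (star g)) _ hKcpt hKsa hTS
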